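/- There exists a probability distribution p on subsets of a 3-element ground set whose generating polynomial is strongly log-concave but which is not log-submodular; hence strong log-concavity does not imply log-submodularity. -/

import Mathlib

noncomputable def pderiv8 (i : Fin 3) (f : (Fin 3 → ℝ) → ℝ) : (Fin 3 → ℝ) → ℝ :=
  fun v => fderiv ℝ f v (Pi.single i 1)

noncomputable def genPoly8 (p : Finset (Fin 3) → ℝ) (v : Fin 3 → ℝ) : ℝ :=
  ∑ S : Finset (Fin 3), p S * ∏ i ∈ S, v i

noncomputable def myp : Finset (Fin 3) → ℝ := fun S =>
  if S = ∅ then 3/9 else if S = {0} then 2/9 else if S = {1} then 2/9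
  else if S = ({0,1} : Finset (Fin 3)) then 2/9 else 0

noncomputable def F0 : (Fin 3 → ℝ) → ℝ := fun v => (3 + 2*v 0 + 2*v 1 + 2*(v 0 * v 1)) * (9:ℝ)⁻¹
noncomputable def F1 : (Fin 3 → ℝ) → ℝ := fun v => (2 + 2*v 1) * (9:ℝ)⁻¹
noncomputable def F2 : (Fin 3 → ℝ) → ℝ := fun v => (2 + 2*v 0) * (9:ℝ)⁻¹

lemma univ_fin3 : (Finset.univ : Finset (Finset (Fin 3))) =
    {∅, {0}, {1}, {2}, {0,1}, {0,2}, {1,2}, {0,1,2}} := by decide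

lemma sum_myp : ∑ S : Finset (Fin 3), myp S = 1 := by
  rw [univ_fin3]
  repeat rw [Finset.sum_insert (by decide)]
  rw [Finset.sum_singleton]
  simp only [myp]
  simp (config := { decide := true }) only [if_false, if_true, reduceIte]
  norm_num

lemma gen_eq : genPoly8 myp = F0 := by
  funext v
  rw [genPoly8, univ_fin3]
  repeat rw [Finset.sum_insert (by decide)]
  rw [Finset.sum_singleton]
  norm_num [myp]
  simp (config := { decide := true }) only [if_false, if_true, reduceIte]
  rw [F0]
  ring

lemma proj_hasFDerivAt (j : Fin 3) (v : Fin 3 → ℝ) :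
    HasFDerivAt (fun v : Fin 3 → ℝ => v j)
      (ContinuousLinearMap.proj (R := ℝ) (φ := fun _ : Fin 3 => ℝ) j) v := by
  exact (ContinuousLinearMap.proj (R := ℝ) (φ := fun _ : Fin 3 => ℝ) j).hasFDerivAt

lemma pd_F0 (i : Fin 3) (v : Fin 3 → ℝ) :
    pderiv8 i F0 v =
      (2 * (Pi.single i 1 : Fin 3 → ℝ) 0 + 2 * (Pi.single i 1 : Fin 3 → ℝ) 1
        + 2*(v 0 * (Pi.single i 1 : Fin 3 → ℝ) 1 + v 1 * (Pi.single i 1 : Fin 3 → ℝ) 0)) * (9:ℝ)⁻¹ := by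
  have h0 := proj_hasFDerivAt 0 v
  have h1 := proj_hasFDerivAt 1 v
  have h : HasFDerivAt F0 _ v :=
    ((((h0.const_mul (2:ℝ)).const_add 3).add (h1.const_mul 2)).add
      ((h0.mul h1).const_mul 2)).mul_const (9:ℝ)⁻¹
  show fderiv ℝ F0 v (Pi.single i 1) = _
  rw [h.fderiv]
  simp [ContinuousLinearMap.proj_apply, smul_eq_mul]
  ring

lemma pd_F1 (i : Fin 3) (v : Fin 3 → ℝ) :
    pderiv8 i F1 v = 2 * (Pi.single i 1 : Fin 3 → ℝ) 1 * (9:ℝ)⁻¹ := by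
  have h1 := proj_hasFDerivAt 1 v
  have h : HasFDerivAt F1 _ v := ((h1.const_mul (2:ℝ)).const_add 2).mul_const (9:ℝ)⁻¹
  show fderiv ℝ F1 v (Pi.single i 1) = _
  rw [h.fderiv]
  simp [ContinuousLinearMap.proj_apply, smul_eq_mul]
  ring

lemma pd_F2 (i : Fin 3) (v : Fin 3 → ℝ) :
    pderiv8 i F2 v = 2 * (Pi.single i 1 : Fin 3 → ℝ) 0 * (9:ℝ)⁻¹ := by
  have h0 := proj_hasFDerivAt 0 v
  have h : HasFDerivAt F2 _ v := ((h0.const_mul (2:ℝ)).const_add 2).mul_const (9:ℝ)⁻¹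
  show fderiv ℝ F2 v (Pi.single i 1) = _
  rw [h.fderiv]
  simp [ContinuousLinearMap.proj_apply, smul_eq_mul]
  ring

lemma pd_const (i : Fin 3) (c : ℝ) : pderiv8 i (fun _ => c) = fun _ => 0 := by
  funext v
  show fderiv ℝ (fun _ => c) v (Pi.single i 1) = 0
  rw [fderiv_fun_const]
  simp

lemma pd_F0_0 : pderiv8 0 F0 = F1 := by
  funext v; rw [pd_F0, F1]
  simp (config := { decide := true }) only [Pi.single_apply, if_true, if_false, reduceIte]
  ring

lemma pd_F0_1 : pderiv8 1 F0 = F2 := by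
  funext v; rw [pd_F0, F2]
  simp (config := { decide := true }) only [Pi.single_apply, if_true, if_false, reduceIte]
  ring

lemma pd_F0_2 : pderiv8 2 F0 = fun _ => 0 := by
  funext v; rw [pd_F0]
  simp (config := { decide := true }) only [Pi.single_apply, if_true, if_false, reduceIte]
  ring

def posOrth : Set (Fin 3 → ℝ) := {v : Fin 3 → ℝ | ∀ i, 0 < v i}

lemma Sconv : Convex ℝ posOrth := by
  intro x hx y hy a b ha hb hab
  intro i
  simp only [Pi.add_apply, Pi.smul_apply, smul_eq_mul]
  rcases eq_or_lt_of_le ha with h|h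
  · have hb1 : b = 1 := by linarith
    simp only [← h, hb1, zero_mul, one_mul, zero_add]
    exact hy i
  · nlinarith [mul_pos h (hx i), mul_nonneg hb (hy i).le]

lemma concave_const (c : ℝ) : ConcaveOn ℝ posOrth (fun _ : Fin 3 → ℝ => Real.log c) :=
  concaveOn_const _ Sconv

lemma concave_log_F1 : ConcaveOn ℝ posOrth (fun v => Real.log (F1 v)) := by
  refine ⟨Sconv, ?_⟩
  intro x hx y hy a b ha hb hab
  have hlog := strictConcaveOn_log_Ioi.concaveOn
  have h1 : F1 x ∈ Set.Ioi (0:ℝ) := by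
    have := hx 1; simp only [F1, Set.mem_Ioi]; nlinarith
  have h2 : F1 y ∈ Set.Ioi (0:ℝ) := by
    have := hy 1; simp only [F1, Set.mem_Ioi]; nlinarith
  have key := hlog.2 h1 h2 ha hb hab
  have heq : F1 (a • x + b • y) = a • F1 x + b • F1 y := by
    simp only [F1, Pi.add_apply, Pi.smul_apply, smul_eq_mul]
    linear_combination (-(2:ℝ)/9) * hab
  show a • Real.log (F1 x) + b • Real.log (F1 y) ≤ Real.log (F1 (a • x + b • y))
  rw [heq]; exact key

lemma concave_log_F2 : ConcaveOn ℝ posOrth (fun v => Real.log (F2 v)) := by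
  refine ⟨Sconv, ?_⟩
  intro x hx y hy a b ha hb hab
  have hlog := strictConcaveOn_log_Ioi.concaveOn
  have h1 : F2 x ∈ Set.Ioi (0:ℝ) := by
    have := hx 0; simp only [F2, Set.mem_Ioi]; nlinarith
  have h2 : F2 y ∈ Set.Ioi (0:ℝ) := by
    have := hy 0; simp only [F2, Set.mem_Ioi]; nlinarith
  have key := hlog.2 h1 h2 ha hb hab
  have heq : F2 (a • x + b • y) = a • F2 x + b • F2 y := by
    simp only [F2, Pi.add_apply, Pi.smul_apply, smul_eq_mul]
    linear_combination (-(2:ℝ)/9) * hab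
  show a • Real.log (F2 x) + b • Real.log (F2 y) ≤ Real.log (F2 (a • x + b • y))
  rw [heq]; exact key

lemma key_ineq (U W Du Dw : ℝ) (hU : 0 ≤ U) (hW : 0 ≤ W) :
    4*Du*Dw*(3 + 2*U + 2*W + 2*(U*W)) ≤ (2*Du + 2*Dw + 2*(Du*W + U*Dw))^2 := by
  nlinarith [sq_nonneg (Du*(2+2*W) - Dw*(2+2*U)), sq_nonneg (Du*(2+2*W) + Dw*(2+2*U)),
    mul_nonneg hU hW, sq_nonneg (Du - Dw), sq_nonneg (Du + Dw)]

lemma concave_log_F0 : ConcaveOn ℝ posOrth (fun v => Real.log (F0 v)) := by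
  refine ⟨Sconv, ?_⟩
  intro x hx y hy a b ha hb hab
  have hx0 := hx 0; have hx1 := hx 1; have hy0 := hy 0; have hy1 := hy 1
  set du := x 0 - y 0 with hdu
  set dw := x 1 - y 1 with hdw
  set P : ℝ → ℝ := fun t =>
    (3 + 2*(y 0 + t*du) + 2*(y 1 + t*dw) + 2*((y 0 + t*du)*(y 1 + t*dw))) * (9:ℝ)⁻¹ with hPdef
  set P' : ℝ → ℝ := fun t =>
    (2*du + 2*dw + 2*(du*(y 1 + t*dw) + (y 0 + t*du)*dw)) * (9:ℝ)⁻¹ with hP'def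
  have hu : ∀ t ∈ Set.Icc (0:ℝ) 1, 0 < y 0 + t*du := by
    rintro t ⟨ht0, ht1⟩
    have : y 0 + t*du = t*x 0 + (1-t)*y 0 := by rw [hdu]; ring
    rw [this]
    rcases le_or_gt t (1/2) with h|h
    · nlinarith [mul_nonneg ht0 hx0.le]
    · nlinarith [mul_nonneg (by linarith : (0:ℝ) ≤ 1-t) hy0.le]
  have hw : ∀ t ∈ Set.Icc (0:ℝ) 1, 0 < y 1 + t*dw := by
    rintro t ⟨ht0, ht1⟩
    have : y 1 + t*dw = t*x 1 + (1-t)*y 1 := by rw [hdw]; ring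
    rw [this]
    rcases le_or_gt t (1/2) with h|h
    · nlinarith [mul_nonneg ht0 hx1.le]
    · nlinarith [mul_nonneg (by linarith : (0:ℝ) ≤ 1-t) hy1.le]
  have hP : ∀ t ∈ Set.Icc (0:ℝ) 1, 0 < P t := by
    intro t ht
    have h1 := hu t ht; have h2 := hw t ht
    rw [hPdef]
    have : (0:ℝ) < 3 + 2*(y 0 + t*du) + 2*(y 1 + t*dw) + 2*((y 0 + t*du)*(y 1 + t*dw)) := by
      nlinarith [mul_pos h1 h2]
    positivity
  have hderiv : ∀ t, HasDerivAt P (P' t) t := by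
    intro t
    have hu' : HasDerivAt (fun s : ℝ => y 0 + s*du) du t := by
      simpa using ((hasDerivAt_id t).mul_const du).const_add (y 0)
    have hw' : HasDerivAt (fun s : ℝ => y 1 + s*dw) dw t := by
      simpa using ((hasDerivAt_id t).mul_const dw).const_add (y 1)
    have h := ((((hu'.const_mul (2:ℝ)).const_add 3).add (hw'.const_mul 2)).add
      ((hu'.mul hw').const_mul 2)).mul_const (9:ℝ)⁻¹
    rw [hPdef, hP'def]
    convert h using 1
    all_goals first | rfl | (simp only [smul_eq_mul]; ring) | ring
  have hderiv2 : ∀ t, HasDerivAt P' (4*du*dw*(9:ℝ)⁻¹) t := by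
    intro t
    have hu' : HasDerivAt (fun s : ℝ => y 1 + s*dw) dw t := by
      simpa using ((hasDerivAt_id t).mul_const dw).const_add (y 1)
    have hv' : HasDerivAt (fun s : ℝ => y 0 + s*du) du t := by
      simpa using ((hasDerivAt_id t).mul_const du).const_add (y 0)
    have h := (((hasDerivAt_const t (2*du + 2*dw)).add
      (((hu'.const_mul du).add (hv'.mul_const dw)).const_mul 2)).mul_const (9:ℝ)⁻¹)
    rw [hP'def]
    convert h using 1
    all_goals first | rfl | (simp only [smul_eq_mul]; ring) | ring
  have hPc : Continuous P := by
    rw [hPdef]; fun_prop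
  set ψ : ℝ → ℝ := fun t => Real.log (P t) with hψdef
  have hcont : ContinuousOn ψ (Set.Icc 0 1) := by
    rw [hψdef]
    exact (hPc.continuousOn).log (fun t ht => (hP t ht).ne')
  have key : ConcaveOn ℝ (Set.Icc (0:ℝ) 1) ψ := by
    apply concaveOn_of_hasDerivWithinAt2_nonpos (f' := fun t => P' t / P t)
      (f'' := fun t => (4*du*dw*(9:ℝ)⁻¹ * P t - P' t * P' t) / P t ^ 2)
      (convex_Icc 0 1) hcont
    · intro t ht
      rw [interior_Icc] at ht
      have hne : P t ≠ 0 := (hP t (Set.Ioo_subset_Icc_self ht)).ne'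
      exact (((hderiv t).log hne)).hasDerivWithinAt
    · intro t ht
      rw [interior_Icc] at ht
      have hne : P t ≠ 0 := (hP t (Set.Ioo_subset_Icc_self ht)).ne'
      exact (((hderiv2 t).div (hderiv t) hne)).hasDerivWithinAt
    · intro t ht
      rw [interior_Icc] at ht
      have htI := Set.Ioo_subset_Icc_self ht
      have hU := hu t htI; have hW := hw t htI
      have hkey := key_ineq (y 0 + t*du) (y 1 + t*dw) du dw hU.le hW.le
      have hnum : 4*du*dw*(9:ℝ)⁻¹ * P t - P' t * P' t ≤ 0 := by
        have hPt : P t = (3 + 2*(y 0 + t*du) + 2*(y 1 + t*dw)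
            + 2*((y 0 + t*du)*(y 1 + t*dw))) * (9:ℝ)⁻¹ := by rw [hPdef]
        have hP't : P' t = (2*du + 2*dw + 2*(du*(y 1 + t*dw)
            + (y 0 + t*du)*dw)) * (9:ℝ)⁻¹ := by rw [hP'def]
        rw [hPt, hP't]
        have heq : 4*du*dw*(9:ℝ)⁻¹ * ((3 + 2*(y 0 + t*du) + 2*(y 1 + t*dw)
              + 2*((y 0 + t*du)*(y 1 + t*dw))) * (9:ℝ)⁻¹)
            - (2*du + 2*dw + 2*(du*(y 1 + t*dw) + (y 0 + t*du)*dw)) * (9:ℝ)⁻¹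
              * ((2*du + 2*dw + 2*(du*(y 1 + t*dw) + (y 0 + t*du)*dw)) * (9:ℝ)⁻¹)
            = (4*du*dw*(3 + 2*(y 0 + t*du) + 2*(y 1 + t*dw) + 2*((y 0 + t*du)*(y 1 + t*dw)))
              - (2*du + 2*dw + 2*(du*(y 1 + t*dw) + (y 0 + t*du)*dw))^2) * (81:ℝ)⁻¹ := by
          ring
        rw [heq]
        apply mul_nonpos_of_nonpos_of_nonneg
        · linarith [hkey]
        · norm_num
      exact div_nonpos_of_nonpos_of_nonneg hnum (sq_nonneg _)
  have trip := key.2 (Set.right_mem_Icc.2 zero_le_one) (Set.left_mem_Icc.2 zero_le_one) ha hb hab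
  have e1 : P 1 = F0 x := by
    rw [hPdef, F0, hdu, hdw]; ring
  have e0 : P 0 = F0 y := by
    rw [hPdef, F0]; ring
  have hb' : b = 1 - a := by linarith
  have ea : P a = F0 (a • x + b • y) := by
    rw [hPdef, F0]
    simp only [Pi.add_apply, Pi.smul_apply, smul_eq_mul]
    rw [hb', hdu, hdw]; ring
  simp only [hψdef, smul_eq_mul, mul_one, mul_zero, add_zero] at trip
  simp only [smul_eq_mul]
  rw [← ea, ← e1, ← e0]
  exact trip

inductive Good : ((Fin 3 → ℝ) → ℝ) → Prop
  | isF0 : Good F0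
  | isF1 : Good F1
  | isF2 : Good F2
  | isConst (c : ℝ) : Good (fun _ => c)

lemma good_pderiv (i : Fin 3) (f : (Fin 3 → ℝ) → ℝ) (h : Good f) : Good (pderiv8 i f) := by
  cases h with
  | isF0 =>
    fin_cases i
    · show Good (pderiv8 0 F0); rw [pd_F0_0]; exact Good.isF1
    · show Good (pderiv8 1 F0); rw [pd_F0_1]; exact Good.isF2
    · show Good (pderiv8 2 F0); rw [pd_F0_2]; exact Good.isConst 0
  | isF1 =>
    have : pderiv8 i F1 = fun _ => 2 * (Pi.single i 1 : Fin 3 → ℝ) 1 * (9:ℝ)⁻¹ :=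
      funext fun v => pd_F1 i v
    rw [this]; exact Good.isConst _
  | isF2 =>
    have : pderiv8 i F2 = fun _ => 2 * (Pi.single i 1 : Fin 3 → ℝ) 0 * (9:ℝ)⁻¹ :=
      funext fun v => pd_F2 i v
    rw [this]; exact Good.isConst _
  | isConst c =>
    rw [pd_const]; exact Good.isConst 0

lemma good_concave (f : (Fin 3 → ℝ) → ℝ) (h : Good f) :
    ConcaveOn ℝ posOrth (fun v => Real.log (f v)) := by
  cases h with
  | isF0 => exact concave_log_F0
  | isF1 => exact concave_log_F1
  | isF2 => exact concave_log_F2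
  | isConst c => exact concave_const c

theorem stmt_8 :
    ∃ p : Finset (Fin 3) → ℝ,
      (∀ S, 0 ≤ p S) ∧ (∑ S : Finset (Fin 3), p S = 1) ∧
      (∀ l : List (Fin 3),
        ConcaveOn ℝ {v : Fin 3 → ℝ | ∀ i, 0 < v i}
          (fun v => Real.log ((l.foldr pderiv8 (genPoly8 p)) v))) ∧
      ¬ (∀ S T : Finset (Fin 3), p (S ∪ T) * p (S ∩ T) ≤ p S * p T) := by
  refine ⟨myp, ?_, sum_myp, ?_, ?_⟩
  · intro S
    rw [myp]
    split_ifs <;> norm_num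
  · intro l
    have hgood : Good (l.foldr pderiv8 (genPoly8 myp)) := by
      induction l with
      | nil => rw [List.foldr_nil, gen_eq]; exact Good.isF0
      | cons i l ih => rw [List.foldr_cons]; exact good_pderiv i _ ih
    exact good_concave _ hgood
  · intro h
    have := h {0} {1}
    rw [show ({0} ∪ {1} : Finset (Fin 3)) = {0,1} from by decide,
      show ({0} ∩ {1} : Finset (Fin 3)) = ∅ from by decide] at this
    simp only [myp] at this
    simp (config := { decide := true }) only [if_false, if_true, reduceIte] at this
    norm_num at this
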